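/- Let X, Y : H0 -> H1 be bounded operators with ||X|| <= 1 and ||Y|| <= 1 such that the orthogonal projections of H = H0 ⊕ H1 onto the graphs G(H0,X) and G(H0,Y) commute. Set L = Ker(I + Y*X), a closed subspace of H0. Then: (a) L = Ker(I + X*Y); (b) L is contained in Ker(I - X*X) ∩ Ker(I - Y*Y); (c) Yx = -Xx for all x in L and Yx = Xx for all x in the orthogonal complement L^perp of L in H0; (d) L = Ker(X + Y) ∩ (Ker X ∩ Ker Y)^perp; (e) L^perp = Ker(X - Y). -/

import Mathlib

noncomputable section

open ContinuousLinearMap in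
private lemma aux_contraction_norm_le {H0 H1 : Type*}
    [NormedAddCommGroup H0] [InnerProductSpace ℂ H0]
    [NormedAddCommGroup H1] [InnerProductSpace ℂ H1]
    (X : H0 →L[ℂ] H1) (hX : ‖X‖ ≤ 1) (x : H0) : ‖X x‖ ≤ ‖x‖ := by
  simpa using X.le_of_opNorm_le hX x

open ContinuousLinearMap in
private lemma aux_adjoint_comp_self_eq {H0 H1 : Type*}
    [NormedAddCommGroup H0] [InnerProductSpace ℂ H0] [CompleteSpace H0]
    [NormedAddCommGroup H1] [InnerProductSpace ℂ H1] [CompleteSpace H1]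
    (X : H0 →L[ℂ] H1) (hX : ‖X‖ ≤ 1) {x : H0} (h : ‖x‖ ≤ ‖X x‖) :
    ContinuousLinearMap.adjoint X (X x) = x := by
  have hXx : ‖X x‖ ≤ ‖x‖ := aux_contraction_norm_le X hX x
  have hadj : ‖ContinuousLinearMap.adjoint X‖ ≤ 1 := by
    rw [show ‖ContinuousLinearMap.adjoint X‖ = ‖X‖ from
      LinearIsometryEquiv.norm_map ContinuousLinearMap.adjoint X]
    exact hX
  have h2 : ‖ContinuousLinearMap.adjoint X (X x)‖ ≤ ‖x‖ :=
    le_trans (aux_contraction_norm_le _ hadj (X x)) hXx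
  have hre : RCLike.re (inner (𝕜 := ℂ) (ContinuousLinearMap.adjoint X (X x)) x)
      = ‖X x‖ ^ 2 := by
    rw [ContinuousLinearMap.adjoint_inner_left]
    simp [inner_self_eq_norm_sq, sq]
  have hsq : ‖ContinuousLinearMap.adjoint X (X x) - x‖ ^ 2 ≤ 0 := by
    rw [@norm_sub_sq ℂ, hre]
    nlinarith [norm_nonneg (X x), norm_nonneg x,
      norm_nonneg (ContinuousLinearMap.adjoint X (X x))]
  have : ‖ContinuousLinearMap.adjoint X (X x) - x‖ = 0 := by
    nlinarith [norm_nonneg (ContinuousLinearMap.adjoint X (X x) - x)]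
  rw [norm_eq_zero, sub_eq_zero] at this
  exact this

/-- Core algebraic lemma: if `x + Y* X x = 0` for contractions `X, Y`, then
`X* X x = x` and `Y x = - X x`. -/
private lemma aux_ker_lemma {H0 H1 : Type*}
    [NormedAddCommGroup H0] [InnerProductSpace ℂ H0] [CompleteSpace H0]
    [NormedAddCommGroup H1] [InnerProductSpace ℂ H1] [CompleteSpace H1]
    (X Y : H0 →L[ℂ] H1) (hX : ‖X‖ ≤ 1) (hY : ‖Y‖ ≤ 1) {x : H0}
    (hx : x + ContinuousLinearMap.adjoint Y (X x) = 0) :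
    ContinuousLinearMap.adjoint X (X x) = x ∧ Y x = -(X x) := by
  have hYadj : ‖ContinuousLinearMap.adjoint Y‖ ≤ 1 := by
    rw [show ‖ContinuousLinearMap.adjoint Y‖ = ‖Y‖ from
      LinearIsometryEquiv.norm_map ContinuousLinearMap.adjoint Y]
    exact hY
  have hYX : ContinuousLinearMap.adjoint Y (X x) = -x := by
    linear_combination (norm := abel) hx
  have h1 : ‖x‖ ≤ ‖X x‖ := by
    calc ‖x‖ = ‖ContinuousLinearMap.adjoint Y (X x)‖ := by rw [hYX, norm_neg]
    _ ≤ ‖X x‖ := aux_contraction_norm_le _ hYadj (X x)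
  have hXX : ContinuousLinearMap.adjoint X (X x) = x := aux_adjoint_comp_self_eq X hX h1
  have h2 : ‖X x‖ ≤ ‖ContinuousLinearMap.adjoint Y (X x)‖ := by
    rw [hYX, norm_neg]; exact aux_contraction_norm_le X hX x
  have hYY : ContinuousLinearMap.adjoint (ContinuousLinearMap.adjoint Y)
      (ContinuousLinearMap.adjoint Y (X x)) = X x :=
    aux_adjoint_comp_self_eq (ContinuousLinearMap.adjoint Y) hYadj h2
  rw [ContinuousLinearMap.adjoint_adjoint, hYX, map_neg] at hYY
  exact ⟨hXX, by rw [← hYY, neg_neg]⟩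

/-- Let `X, Y : H₀ → H₁` be contractions such that the orthogonal projections
of `H = H₀ ⊕ H₁` onto their graphs commute, and set `L = Ker (I + Y* X)`.  Then
(a) `L = Ker (I + X* Y)`; (b) `L ⊆ Ker (I - X* X) ⊓ Ker (I - Y* Y)`; (c) `Y = -X` on `L` and
`Y = X` on `Lᗮ`; (d) `L = Ker (X + Y) ⊓ (Ker X ⊓ Ker Y)ᗮ`; (e) `Lᗮ = Ker (X - Y)`. -/
theorem commuting_graph_projections_structure
    {H0 H1 : Type*}
    [NormedAddCommGroup H0] [InnerProductSpace ℂ H0] [CompleteSpace H0]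
    [NormedAddCommGroup H1] [InnerProductSpace ℂ H1] [CompleteSpace H1]
    (X Y : H0 →L[ℂ] H1) (hX : ‖X‖ ≤ 1) (hY : ‖Y‖ ≤ 1)
    (PX PY : WithLp 2 (H0 × H1) →L[ℂ] WithLp 2 (H0 × H1))
    (hPX : IsIdempotentElem PX) (hPXsa : IsSelfAdjoint PX)
    (hPY : IsIdempotentElem PY) (hPYsa : IsSelfAdjoint PY)
    (hPXran : LinearMap.range PX.toLinearMap =
      (LinearMap.graph X.toLinearMap).map (WithLp.linearEquiv 2 ℂ (H0 × H1)).symm.toLinearMap)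
    (hPYran : LinearMap.range PY.toLinearMap =
      (LinearMap.graph Y.toLinearMap).map (WithLp.linearEquiv 2 ℂ (H0 × H1)).symm.toLinearMap)
    (hcomm : PX * PY = PY * PX) :
    (LinearMap.ker (ContinuousLinearMap.id ℂ H0 + (ContinuousLinearMap.adjoint Y).comp X).toLinearMap =
      LinearMap.ker (ContinuousLinearMap.id ℂ H0 + (ContinuousLinearMap.adjoint X).comp Y).toLinearMap) ∧
    (LinearMap.ker (ContinuousLinearMap.id ℂ H0 + (ContinuousLinearMap.adjoint Y).comp X).toLinearMap ≤
      LinearMap.ker (ContinuousLinearMap.id ℂ H0 - (ContinuousLinearMap.adjoint X).comp X).toLinearMap ⊓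
      LinearMap.ker (ContinuousLinearMap.id ℂ H0 - (ContinuousLinearMap.adjoint Y).comp Y).toLinearMap) ∧
    (∀ x ∈ LinearMap.ker (ContinuousLinearMap.id ℂ H0 + (ContinuousLinearMap.adjoint Y).comp X).toLinearMap,
      Y x = -(X x)) ∧
    (∀ x ∈ (LinearMap.ker
        (ContinuousLinearMap.id ℂ H0 + (ContinuousLinearMap.adjoint Y).comp X).toLinearMap)ᗮ,
      Y x = X x) ∧
    (LinearMap.ker (ContinuousLinearMap.id ℂ H0 + (ContinuousLinearMap.adjoint Y).comp X).toLinearMap =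
      LinearMap.ker (X + Y).toLinearMap ⊓ (LinearMap.ker X.toLinearMap ⊓ LinearMap.ker Y.toLinearMap)ᗮ) ∧
    ((LinearMap.ker (ContinuousLinearMap.id ℂ H0 + (ContinuousLinearMap.adjoint Y).comp X).toLinearMap)ᗮ =
      LinearMap.ker (X - Y).toLinearMap) := by
  set L := LinearMap.ker (ContinuousLinearMap.id ℂ H0 + (ContinuousLinearMap.adjoint Y).comp X).toLinearMap
    with hL
  -- membership in L
  have hmemL : ∀ x : H0, x ∈ L ↔ x + ContinuousLinearMap.adjoint Y (X x) = 0 := by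
    intro x
    rw [hL, LinearMap.mem_ker]
    simp [ContinuousLinearMap.add_apply]
  -- main consequences on L
  have hkey : ∀ x ∈ L, ContinuousLinearMap.adjoint X (X x) = x ∧ Y x = -(X x) := by
    intro x hx
    exact aux_ker_lemma X Y hX hY ((hmemL x).1 hx)
  -- ker (X - Y) ≤ Lᗮ
  have hsub : LinearMap.ker (X - Y).toLinearMap ≤ Lᗮ := by
    intro u hu
    rw [LinearMap.mem_ker, ContinuousLinearMap.coe_coe, ContinuousLinearMap.sub_apply, sub_eq_zero] at hu
    rw [Submodule.mem_orthogonal]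
    intro x hxL
    obtain ⟨hXX, hYx⟩ := hkey x hxL
    have hYX : ContinuousLinearMap.adjoint Y (X x) = -x := by
      have := (hmemL x).1 hxL
      linear_combination (norm := abel) this
    have : (inner ℂ x u : ℂ) = -(inner ℂ x u : ℂ) := by
      calc (inner ℂ x u : ℂ) = inner ℂ (ContinuousLinearMap.adjoint X (X x)) u := by rw [hXX]
      _ = inner ℂ (X x) (X u) := by rw [ContinuousLinearMap.adjoint_inner_left]
      _ = inner ℂ (X x) (Y u) := by rw [hu]
      _ = inner ℂ (ContinuousLinearMap.adjoint Y (X x)) u := by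
          rw [ContinuousLinearMap.adjoint_inner_left]
      _ = -(inner ℂ x u : ℂ) := by rw [hYX, inner_neg_left]
    have h2 : (2 : ℂ) * inner ℂ x u = 0 := by linear_combination this
    simpa using h2
  -- the commuting projection argument: Y = X on Lᗮ
  have hc2 : ∀ u ∈ Lᗮ, Y u = X u := by
    intro u hu
    set v : WithLp 2 (H0 × H1) := (WithLp.linearEquiv 2 ℂ (H0 × H1)).symm (u, X u) with hv
    have hvX : v ∈ LinearMap.range PX.toLinearMap := by
      rw [hPXran]
      exact Submodule.mem_map.2 ⟨(u, X u), LinearMap.mem_graph_iff _ _ |>.2 rfl, rfl⟩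
    have hfix : PX v = v := by
      obtain ⟨p, hp⟩ := hvX
      rw [← hp, ContinuousLinearMap.coe_coe, ← ContinuousLinearMap.mul_apply, hPX]
    set q : WithLp 2 (H0 × H1) := PY v with hq
    have hqY : q ∈ LinearMap.range PY.toLinearMap := ⟨v, rfl⟩
    have hqX : q ∈ LinearMap.range PX.toLinearMap := by
      refine ⟨PY v, ?_⟩
      have h1 : PX (PY v) = (PX * PY) v := rfl
      rw [ContinuousLinearMap.coe_coe, h1, hcomm, ContinuousLinearMap.mul_apply, hfix]
    -- extract components of q
    set w : H0 := ((WithLp.linearEquiv 2 ℂ (H0 × H1)) q).1 with hw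
    have hqXg : X w = ((WithLp.linearEquiv 2 ℂ (H0 × H1)) q).2 := by
      rw [hPXran] at hqX
      obtain ⟨g, hg, hgq⟩ := Submodule.mem_map.1 hqX
      have : g = (WithLp.linearEquiv 2 ℂ (H0 × H1)) q := by
        rw [← hgq]; rfl
      rw [LinearMap.mem_graph_iff] at hg
      rw [this] at hg
      exact hg.symm
    have hqYg : Y w = ((WithLp.linearEquiv 2 ℂ (H0 × H1)) q).2 := by
      rw [hPYran] at hqY
      obtain ⟨g, hg, hgq⟩ := Submodule.mem_map.1 hqY
      have : g = (WithLp.linearEquiv 2 ℂ (H0 × H1)) q := by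
        rw [← hgq]; rfl
      rw [LinearMap.mem_graph_iff] at hg
      rw [this] at hg
      exact hg.symm
    have hwker : w ∈ LinearMap.ker (X - Y).toLinearMap := by
      rw [LinearMap.mem_ker, ContinuousLinearMap.coe_coe, ContinuousLinearMap.sub_apply, sub_eq_zero, hqXg, hqYg]
    -- orthogonality of v - q to range PY
    have horth : ∀ z : H0, (inner ℂ (v - q) ((WithLp.linearEquiv 2 ℂ (H0 × H1)).symm (z, Y z)) : ℂ)
        = 0 := by
      intro z
      set n : WithLp 2 (H0 × H1) := (WithLp.linearEquiv 2 ℂ (H0 × H1)).symm (z, Y z) with hn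
      have hnY : n ∈ LinearMap.range PY.toLinearMap := by
        rw [hPYran]
        exact Submodule.mem_map.2 ⟨(z, Y z), LinearMap.mem_graph_iff _ _ |>.2 rfl, rfl⟩
      obtain ⟨m, hm⟩ := hnY
      have : (inner ℂ (v - q) n : ℂ) = inner ℂ (PY (v - q)) m := by
        rw [← hm, ContinuousLinearMap.coe_coe, ← ContinuousLinearMap.adjoint_inner_left PY m (v - q), hPYsa.adjoint_eq]
      rw [this]
      have : PY (v - q) = 0 := by
        rw [map_sub, hq, ← ContinuousLinearMap.mul_apply, hPY, sub_self]
      rw [this, inner_zero_left]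
    -- translate: (u - w) + Y*(X(u - w)) = 0
    have hvq1 : (v - q).ofLp.1 = u - w := rfl
    have hvq2 : (v - q).ofLp.2 = X u - ((WithLp.linearEquiv 2 ℂ (H0 × H1)) q).2 := rfl
    have hcomp : ∀ z : H0,
        (inner ℂ ((u - w) + ContinuousLinearMap.adjoint Y (X (u - w))) z : ℂ) = 0 := by
      intro z
      have h0 := horth z
      rw [WithLp.prod_inner_apply] at h0
      have e1 : (v - q).ofLp.fst = u - w := rfl
      have e2 : (v - q).ofLp.snd = X (u - w) := by
        have : (v - q).ofLp.snd = X u - ((WithLp.linearEquiv 2 ℂ (H0 × H1)) q).2 := rfl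
        rw [this, ← hqXg, ← map_sub]
      have e3 : ((WithLp.linearEquiv 2 ℂ (H0 × H1)).symm (z, Y z)).ofLp.fst = z := rfl
      have e4 : ((WithLp.linearEquiv 2 ℂ (H0 × H1)).symm (z, Y z)).ofLp.snd = Y z := rfl
      rw [e1, e2, e3, e4] at h0
      rw [inner_add_left, ContinuousLinearMap.adjoint_inner_left]
      exact h0
    have huwL : u - w ∈ L := by
      rw [hmemL]
      have := hcomp ((u - w) + ContinuousLinearMap.adjoint Y (X (u - w)))
      exact inner_self_eq_zero.mp this
    have huwperp : u - w ∈ Lᗮ := Submodule.sub_mem _ hu (hsub hwker)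
    have : u - w = 0 := by
      have := (Submodule.mem_orthogonal _ _).1 huwperp (u - w) huwL
      exact inner_self_eq_zero.mp this
    have huw : u = w := by rwa [sub_eq_zero] at this
    rw [huw, hqXg, hqYg]
  -- (a)
  have hA : L = LinearMap.ker
      (ContinuousLinearMap.id ℂ H0 + (ContinuousLinearMap.adjoint X).comp Y).toLinearMap := by
    apply le_antisymm
    · intro x hx
      obtain ⟨hXX, hYx⟩ := hkey x hx
      rw [LinearMap.mem_ker]
      simp only [ContinuousLinearMap.coe_coe, ContinuousLinearMap.add_apply, ContinuousLinearMap.coe_comp',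
        Function.comp_apply, ContinuousLinearMap.id_apply]
      rw [hYx, map_neg, hXX]
      abel
    · intro x hx
      rw [LinearMap.mem_ker] at hx
      simp only [ContinuousLinearMap.coe_coe, ContinuousLinearMap.add_apply, ContinuousLinearMap.coe_comp',
        Function.comp_apply, ContinuousLinearMap.id_apply] at hx
      obtain ⟨hYY, hXx⟩ := aux_ker_lemma Y X hY hX hx
      rw [hmemL]
      rw [hXx, map_neg, hYY]
      abel
  -- (b)
  have hB : L ≤
      LinearMap.ker (ContinuousLinearMap.id ℂ H0 - (ContinuousLinearMap.adjoint X).comp X).toLinearMap ⊓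
      LinearMap.ker (ContinuousLinearMap.id ℂ H0 - (ContinuousLinearMap.adjoint Y).comp Y).toLinearMap := by
    intro x hx
    obtain ⟨hXX, hYx⟩ := hkey x hx
    have hYX : ContinuousLinearMap.adjoint Y (X x) = -x := by
      have := (hmemL x).1 hx
      linear_combination (norm := abel) this
    rw [Submodule.mem_inf]
    constructor
    · rw [LinearMap.mem_ker]
      simp only [ContinuousLinearMap.coe_coe, ContinuousLinearMap.sub_apply, ContinuousLinearMap.coe_comp',
        Function.comp_apply, ContinuousLinearMap.id_apply]
      rw [hXX, sub_self]
    · rw [LinearMap.mem_ker]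
      simp only [ContinuousLinearMap.coe_coe, ContinuousLinearMap.sub_apply, ContinuousLinearMap.coe_comp',
        Function.comp_apply, ContinuousLinearMap.id_apply]
      rw [hYx, map_neg, hYX]
      abel
  -- (c1)
  have hC1 : ∀ x ∈ L, Y x = -(X x) := fun x hx => (hkey x hx).2
  -- (e)
  have hE : Lᗮ = LinearMap.ker (X - Y).toLinearMap := by
    apply le_antisymm
    · intro u hu
      rw [LinearMap.mem_ker, ContinuousLinearMap.coe_coe, ContinuousLinearMap.sub_apply, sub_eq_zero]
      exact (hc2 u hu).symm
    · exact hsub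
  -- (d)
  have hD : L = LinearMap.ker (X + Y).toLinearMap ⊓ (LinearMap.ker X.toLinearMap ⊓ LinearMap.ker Y.toLinearMap)ᗮ := by
    apply le_antisymm
    · intro x hx
      obtain ⟨hXX, hYx⟩ := hkey x hx
      have hYX : ContinuousLinearMap.adjoint Y (X x) = -x := by
        have := (hmemL x).1 hx
        linear_combination (norm := abel) this
      rw [Submodule.mem_inf]
      constructor
      · rw [LinearMap.mem_ker, ContinuousLinearMap.coe_coe, ContinuousLinearMap.add_apply, hYx]
        abel
      · rw [Submodule.mem_orthogonal]
        intro z hz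
        obtain ⟨hzX, hzY⟩ := Submodule.mem_inf.1 hz
        rw [LinearMap.mem_ker, ContinuousLinearMap.coe_coe] at hzX hzY
        have : (inner ℂ z x : ℂ) = inner ℂ z (-(ContinuousLinearMap.adjoint Y (X x))) := by
          rw [hYX, neg_neg]
        rw [this, inner_neg_right, ContinuousLinearMap.adjoint_inner_right, hzY,
          inner_zero_left, neg_zero]
    · intro x hx
      obtain ⟨hxker, hxperp⟩ := Submodule.mem_inf.1 hx
      rw [LinearMap.mem_ker, ContinuousLinearMap.coe_coe, ContinuousLinearMap.add_apply] at hxker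
      -- decompose x = a + b with a ∈ L, b ∈ Lᗮ
      haveI : CompleteSpace L := (ContinuousLinearMap.isClosed_ker _).completeSpace_coe
      obtain ⟨a, haL, b, hbperp, hxab⟩ := Submodule.exists_add_mem_mem_orthogonal (K := L) x
      have hYa : Y a = -(X a) := (hkey a haL).2
      have hYb : Y b = X b := hc2 b hbperp
      have hXb : X b = 0 := by
        have : X x + Y x = 0 := hxker
        rw [hxab] at this
        rw [map_add, map_add, hYa, hYb] at this
        have h2 : (2 : ℂ) • X b = 0 := by
          rw [two_smul]
          linear_combination (norm := abel) this
        have := smul_eq_zero.mp h2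
        simpa using this
      have hbK : b ∈ LinearMap.ker X.toLinearMap ⊓ LinearMap.ker Y.toLinearMap := by
        rw [Submodule.mem_inf]
        constructor
        · rw [LinearMap.mem_ker]; exact hXb
        · rw [LinearMap.mem_ker, ContinuousLinearMap.coe_coe, hYb]; exact hXb
      have hb0 : b = 0 := by
        have h1 := (Submodule.mem_orthogonal _ _).1 hxperp b hbK
        have h2 : (inner ℂ b a : ℂ) = 0 := by
          rw [← inner_conj_symm]
          rw [(Submodule.mem_orthogonal _ _).1 hbperp a haL]
          simp
        rw [hxab, inner_add_right, h2, zero_add] at h1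
        exact inner_self_eq_zero.mp h1
      rw [hxab, hb0, add_zero]
      exact haL
  exact ⟨hA, hB, hC1, hc2, hD, hE⟩

end
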